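/- arXiv:1009.1729 — 2 statements merged into one kernel-verified Lean document; each statement's English description precedes it below -/
import Mathlib

section
/- Let n ≥ 1, m, k ∈ ℤ, ε = ±1, and let λ ∈ ℝ^n have pairwise distinct nonzero entries. Then for every μ ∈ ℝ^n and every r ∈ {1,…,n}, the Stäckel Hamiltonians satisfy the separation relations ∑_{i=1}^n H_i^{n,m,k}(λ,μ) · λ_r^{n−i} = λ_r^m μ_r² + (ε/4) λ_r^k. -/
noncomputable section

/-- Viète polynomial `q_i(λ) = (-1)^i e_i(λ)`; by convention `q_0 = 1` and `q_i = 0` for `i > n`. -/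
def viete {n : ℕ} (i : ℕ) (lam : Fin n → ℝ) : ℝ :=
  (-1 : ℝ) ^ i * ∑ s ∈ Finset.powersetCard i (Finset.univ : Finset (Fin n)), ∏ j ∈ s, lam j

/-- The partial derivative `∂q_i/∂λ_j` of the `i`-th Viète polynomial. -/
def vieteD {n : ℕ} (i : ℕ) (lam : Fin n → ℝ) (j : Fin n) : ℝ :=
  fderiv ℝ (viete i) lam (Pi.single j 1)

/-- `Δ_j(λ) = ∏_{s ≠ j} (λ_j - λ_s)`. -/
def Delta {n : ℕ} (lam : Fin n → ℝ) (j : Fin n) : ℝ :=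
  ∏ s ∈ Finset.univ.erase j, (lam j - lam s)

/-- Benenti potentials `V_i^{(k)}` for `k ≥ 0`: `Vpos n q k i = V_i^{(k)}(q)` (`i` 1-based),
with `V_i^{(0)} = δ_{i n}` and `V_i^{(k+1)} = V_{i+1}^{(k)} - q_i V_1^{(k)}`, `V_{n+1}^{(k)} := 0`. -/
def Vpos (n : ℕ) (q : ℕ → ℝ) : ℕ → ℕ → ℝ
  | 0, i => if i = n then 1 else 0
  | k + 1, i => (if i = n then 0 else Vpos n q k (i + 1)) - q i * Vpos n q k 1

/-- Benenti potentials for negative superscripts: `Vneg n q j r = V_r^{(-j)}(q)`, via the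
backward recursion `V_r^{(k)} = V_{r-1}^{(k+1)} - (q_{r-1}/q_n) V_n^{(k+1)}`, with
`V_0 := 0` and `q_0 := 1`. -/
def Vneg (n : ℕ) (q : ℕ → ℝ) : ℕ → ℕ → ℝ
  | 0, r => if r = n then 1 else 0
  | j + 1, r =>
      (if r = 1 then 0 else Vneg n q j (r - 1)) -
        (if r = 1 then 1 else q (r - 1)) / q n * Vneg n q j n

/-- Benenti potential `V_i^{(k)}(q)` for `k : ℤ`, `i` 1-based. -/
def benenti (n : ℕ) (q : ℕ → ℝ) (k : ℤ) (i : ℕ) : ℝ :=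
  if 0 ≤ k then Vpos n q k.toNat i else Vneg n q (-k).toNat i

/-- Stäckel Hamiltonian of Benenti type
`H_i^{n,m,k}(λ,μ) = ∑_j (-∂q_i/∂λ_j)(λ) (λ_j^m/Δ_j(λ)) μ_j² + (ε/4) V_i^{(k)}(q(λ))`
(`i` 1-based). -/
def stackelH (n : ℕ) (m k : ℤ) (ε : ℝ) (i : ℕ) (lam mu : Fin n → ℝ) : ℝ :=
  (∑ j : Fin n, (-vieteD i lam j) * (lam j ^ m / Delta lam j) * mu j ^ 2) +
    ε / 4 * benenti n (fun a => viete a lam) k i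

section StackelAux

lemma sum_Icc_one (n : ℕ) (f : ℕ → ℝ) :
    ∑ i ∈ Finset.Icc 1 n, f i = ∑ a ∈ Finset.range n, f (a + 1) := by
  induction n with
  | zero => simp
  | succ n ih =>
      rw [Finset.sum_Icc_succ_top (Nat.le_add_left 1 n), ih, Finset.sum_range_succ]

lemma prod_sub_eq_sum {n : ℕ} (lam : Fin n → ℝ) (x : ℝ) (S : Finset (Fin n)) :
    ∏ s ∈ S, (x - lam s) =
      ∑ a ∈ Finset.range (S.card + 1),
        (-1 : ℝ) ^ a * (∑ t ∈ Finset.powersetCard a S, ∏ j ∈ t, lam j) * x ^ (S.card - a) := by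
  classical
  induction S using Finset.induction_on with
  | empty => simp
  | @insert i S hi ih =>
    have hcard : (insert i S).card = S.card + 1 := Finset.card_insert_of_notMem hi
    have heTop : (∑ t ∈ Finset.powersetCard (S.card + 1) S, ∏ j ∈ t, lam j) = 0 := by
      simp [Finset.powersetCard_eq_empty.mpr (by omega : S.card < S.card + 1)]
    have he' : ∀ a : ℕ,
        (∑ t ∈ Finset.powersetCard (a + 1) (insert i S), ∏ j ∈ t, lam j)
          = (∑ t ∈ Finset.powersetCard (a + 1) S, ∏ j ∈ t, lam j)
            + lam i * (∑ t ∈ Finset.powersetCard a S, ∏ j ∈ t, lam j) := by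
      intro a
      rw [Finset.powersetCard_succ_insert hi]
      have hdisj : Disjoint (Finset.powersetCard (a + 1) S)
          ((Finset.powersetCard a S).image (insert i)) := by
        rw [Finset.disjoint_left]
        intro s hs1 hs2
        obtain ⟨t, ht, rfl⟩ := Finset.mem_image.mp hs2
        have hsub := (Finset.mem_powersetCard.mp hs1).1
        exact hi (hsub (Finset.mem_insert_self i t))
      rw [Finset.sum_union hdisj]
      congr 1
      have hinj : ∀ t1 ∈ Finset.powersetCard a S, ∀ t2 ∈ Finset.powersetCard a S,
          insert i t1 = insert i t2 → t1 = t2 := by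
        intro t1 h1 t2 h2 hins
        have hi1 : i ∉ t1 := fun h => hi ((Finset.mem_powersetCard.mp h1).1 h)
        have hi2 : i ∉ t2 := fun h => hi ((Finset.mem_powersetCard.mp h2).1 h)
        rw [← Finset.erase_insert hi1, ← Finset.erase_insert hi2, hins]
      rw [Finset.sum_image hinj, Finset.mul_sum]
      refine Finset.sum_congr rfl fun t ht => ?_
      have hit : i ∉ t := fun h => hi ((Finset.mem_powersetCard.mp ht).1 h)
      rw [Finset.prod_insert hit]
    have hxB : x * (∑ a ∈ Finset.range (S.card + 1),
          (-1 : ℝ) ^ a * (∑ t ∈ Finset.powersetCard a S, ∏ j ∈ t, lam j) * x ^ (S.card - a))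
        + (∑ a ∈ Finset.range (S.card + 1),
          (-1 : ℝ) ^ a * (∑ t ∈ Finset.powersetCard (a + 1) S, ∏ j ∈ t, lam j) * x ^ (S.card - a))
        = x ^ (S.card + 1) := by
      rw [Finset.sum_range_succ' (fun a => (-1 : ℝ) ^ a *
            (∑ t ∈ Finset.powersetCard a S, ∏ j ∈ t, lam j) * x ^ (S.card - a)),
          Finset.sum_range_succ, heTop, mul_add, Finset.mul_sum]
      have h1 : ∀ a ∈ Finset.range S.card,
          x * ((-1 : ℝ) ^ (a + 1) * (∑ t ∈ Finset.powersetCard (a + 1) S, ∏ j ∈ t, lam j)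
              * x ^ (S.card - (a + 1)))
            = -((-1 : ℝ) ^ a * (∑ t ∈ Finset.powersetCard (a + 1) S, ∏ j ∈ t, lam j)
              * x ^ (S.card - a)) := by
        intro a ha
        have hlt : a < S.card := Finset.mem_range.mp ha
        have hcc : S.card - (a + 1) + 1 = S.card - a := by omega
        rw [← hcc, pow_succ, pow_succ]
        ring
      rw [Finset.sum_congr rfl h1, Finset.sum_neg_distrib]
      simp only [pow_zero, Nat.sub_zero, one_mul, mul_zero, zero_mul, add_zero, pow_succ]
      have : (∑ t ∈ Finset.powersetCard 0 S, ∏ j ∈ t, lam j) = 1 := by simp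
      rw [this]
      ring
    rw [Finset.prod_insert hi, ih, hcard]
    rw [Finset.sum_range_succ' (fun a => (-1 : ℝ) ^ a *
          (∑ t ∈ Finset.powersetCard a (insert i S), ∏ j ∈ t, lam j) * x ^ (S.card + 1 - a))]
    simp only [Nat.succ_sub_succ_eq_sub, he', pow_zero, Nat.sub_zero, one_mul]
    have h0' : (∑ t ∈ Finset.powersetCard 0 (insert i S), ∏ j ∈ t, lam j) = 1 := by simp
    rw [h0']
    have hterm : ∀ a ∈ Finset.range (S.card + 1),
        (-1 : ℝ) ^ (a + 1) * ((∑ t ∈ Finset.powersetCard (a + 1) S, ∏ j ∈ t, lam j)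
            + lam i * (∑ t ∈ Finset.powersetCard a S, ∏ j ∈ t, lam j)) * x ^ (S.card - a)
          = -((-1 : ℝ) ^ a * (∑ t ∈ Finset.powersetCard (a + 1) S, ∏ j ∈ t, lam j)
              * x ^ (S.card - a))
            + -(lam i * ((-1 : ℝ) ^ a * (∑ t ∈ Finset.powersetCard a S, ∏ j ∈ t, lam j)
              * x ^ (S.card - a))) := by
      intro a _
      ring
    rw [Finset.sum_congr rfl hterm, Finset.sum_add_distrib, Finset.sum_neg_distrib,
      Finset.sum_neg_distrib, ← Finset.mul_sum]
    rw [sub_mul]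
    nlinarith [hxB]

lemma hasFDerivAt_viete {n : ℕ} (i : ℕ) (lam : Fin n → ℝ) :
    HasFDerivAt (viete (n := n) i)
      ((-1 : ℝ) ^ i • ∑ s ∈ Finset.powersetCard i (Finset.univ : Finset (Fin n)),
        ∑ t ∈ s, (∏ u ∈ s.erase t, lam u) • ContinuousLinearMap.proj (R := ℝ)
          (φ := fun _ : Fin n => ℝ) t) lam := by
  unfold viete
  exact (HasFDerivAt.fun_sum fun s _hs => hasFDerivAt_finset_prod).const_mul _

lemma vieteD_eq {n : ℕ} (i : ℕ) (lam : Fin n → ℝ) (j : Fin n) :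
    vieteD i lam j = (-1 : ℝ) ^ i *
      ∑ s ∈ Finset.powersetCard i (Finset.univ : Finset (Fin n)),
        (if j ∈ s then ∏ u ∈ s.erase j, lam u else 0) := by
  rw [vieteD, (hasFDerivAt_viete i lam).fderiv]
  simp only [ContinuousLinearMap.smul_apply, ContinuousLinearMap.coe_sum', Finset.sum_apply,
    ContinuousLinearMap.smul_apply, ContinuousLinearMap.proj_apply, smul_eq_mul,
    Pi.single_apply, mul_ite, mul_one, mul_zero, Finset.sum_ite_eq']

lemma indicator_sum_eq {n : ℕ} (lam : Fin n → ℝ) (j : Fin n) (a : ℕ) :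
    ∑ s ∈ Finset.powersetCard (a + 1) (Finset.univ : Finset (Fin n)),
        (if j ∈ s then ∏ u ∈ s.erase j, lam u else 0) =
      ∑ t ∈ Finset.powersetCard a ((Finset.univ : Finset (Fin n)).erase j),
        ∏ u ∈ t, lam u := by
  have h1 : (Finset.univ : Finset (Fin n)) = insert j (Finset.univ.erase j) :=
    (Finset.insert_erase (Finset.mem_univ j)).symm
  conv_lhs => rw [h1, Finset.powersetCard_succ_insert (Finset.notMem_erase _ _)]
  have hdisj : Disjoint (Finset.powersetCard (a + 1) (Finset.univ.erase j))
      ((Finset.powersetCard a (Finset.univ.erase j)).image (insert j)) := by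
    rw [Finset.disjoint_left]
    intro s hs1 hs2
    obtain ⟨t, _ht, rfl⟩ := Finset.mem_image.mp hs2
    have hsub := (Finset.mem_powersetCard.mp hs1).1
    exact Finset.notMem_erase j _ (hsub (Finset.mem_insert_self j t))
  rw [Finset.sum_union hdisj]
  have hz : ∑ s ∈ Finset.powersetCard (a + 1) (Finset.univ.erase j),
      (if j ∈ s then ∏ u ∈ s.erase j, lam u else 0) = 0 := by
    refine Finset.sum_eq_zero fun s hs => ?_
    have hsub := (Finset.mem_powersetCard.mp hs).1
    rw [if_neg fun hj => Finset.notMem_erase j _ (hsub hj)]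
  rw [hz, zero_add]
  have hinj : ∀ t1 ∈ Finset.powersetCard a (Finset.univ.erase j),
      ∀ t2 ∈ Finset.powersetCard a (Finset.univ.erase j),
      insert j t1 = insert j t2 → t1 = t2 := by
    intro t1 h1' t2 h2' hins
    have hj1 : j ∉ t1 := fun h => Finset.notMem_erase j _ ((Finset.mem_powersetCard.mp h1').1 h)
    have hj2 : j ∉ t2 := fun h => Finset.notMem_erase j _ ((Finset.mem_powersetCard.mp h2').1 h)
    rw [← Finset.erase_insert hj1, ← Finset.erase_insert hj2, hins]
  rw [Finset.sum_image hinj]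
  refine Finset.sum_congr rfl fun t ht => ?_
  have hjt : j ∉ t := fun h => Finset.notMem_erase j _ ((Finset.mem_powersetCard.mp ht).1 h)
  rw [if_pos (Finset.mem_insert_self j t), Finset.erase_insert hjt]

lemma sum_neg_vieteD {n : ℕ} (lam : Fin n → ℝ) (x : ℝ) (j : Fin n) :
    ∑ i ∈ Finset.Icc 1 n, (-vieteD i lam j) * x ^ (n - i) =
      ∏ s ∈ (Finset.univ : Finset (Fin n)).erase j, (x - lam s) := by
  have hn : 1 ≤ n := Nat.one_le_iff_ne_zero.mpr (by rintro rfl; exact j.elim0)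
  rw [sum_Icc_one, prod_sub_eq_sum]
  have hc : ((Finset.univ : Finset (Fin n)).erase j).card = n - 1 := by
    rw [Finset.card_erase_of_mem (Finset.mem_univ j), Finset.card_univ, Fintype.card_fin]
  rw [hc, (by omega : n - 1 + 1 = n)]
  refine Finset.sum_congr rfl fun a ha => ?_
  rw [vieteD_eq, indicator_sum_eq, (by omega : n - (a + 1) = n - 1 - a), pow_succ]
  ring

lemma root_identity {n : ℕ} (lam : Fin n → ℝ) (r : Fin n) :
    ∑ i ∈ Finset.Icc 1 n, viete i lam * lam r ^ (n - i) = -(lam r ^ n) := by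
  have h0 : ∏ s ∈ (Finset.univ : Finset (Fin n)), (lam r - lam s) = 0 :=
    Finset.prod_eq_zero (Finset.mem_univ r) (by ring)
  rw [prod_sub_eq_sum, Finset.card_univ, Fintype.card_fin,
    Finset.sum_range_succ' (fun a => (-1 : ℝ) ^ a *
      (∑ t ∈ Finset.powersetCard a (Finset.univ : Finset (Fin n)), ∏ u ∈ t, lam u)
        * lam r ^ (n - a))] at h0
  simp only [pow_zero, Nat.sub_zero, one_mul] at h0
  have h1 : (∑ t ∈ Finset.powersetCard 0 (Finset.univ : Finset (Fin n)),
      ∏ u ∈ t, lam u) = 1 := by simp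
  rw [h1, one_mul] at h0
  rw [sum_Icc_one]
  have h2 : ∀ a ∈ Finset.range n, viete (a + 1) lam * lam r ^ (n - (a + 1))
      = (-1 : ℝ) ^ (a + 1) *
        (∑ t ∈ Finset.powersetCard (a + 1) (Finset.univ : Finset (Fin n)), ∏ u ∈ t, lam u)
          * lam r ^ (n - (a + 1)) := fun a _ => by rw [viete]
  rw [Finset.sum_congr rfl h2]
  linarith [h0]

lemma sum_Vpos {n : ℕ} (hn : 1 ≤ n) (q : ℕ → ℝ) (x : ℝ)
    (hroot : ∑ a ∈ Finset.range n, q (a + 1) * x ^ (n - 1 - a) = -(x ^ n)) (K : ℕ) :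
    ∑ a ∈ Finset.range n, Vpos n q K (a + 1) * x ^ (n - 1 - a) = x ^ K := by
  have hp : n - 1 + 1 = n := by omega
  induction K with
  | zero =>
      simp only [Vpos]
      rw [Finset.sum_eq_single (n - 1)]
      · rw [if_pos hp, one_mul, Nat.sub_self, pow_zero]
      · intro a ha hne
        rw [if_neg (by omega : ¬ a + 1 = n), zero_mul]
      · intro h
        exact absurd (Finset.mem_range.mpr (by omega)) h
  | succ k ih =>
      simp only [Vpos, sub_mul]
      rw [Finset.sum_sub_distrib]
      have h2 : ∑ a ∈ Finset.range n, q (a + 1) * Vpos n q k 1 * x ^ (n - 1 - a)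
          = Vpos n q k 1 * -(x ^ n) := by
        rw [← hroot, Finset.mul_sum]
        exact Finset.sum_congr rfl fun a _ => by ring
      rw [h2]
      have h1 : ∑ a ∈ Finset.range n,
          (if a + 1 = n then 0 else Vpos n q k (a + 1 + 1)) * x ^ (n - 1 - a)
          = (x ^ k - Vpos n q k 1 * x ^ (n - 1)) * x := by
        rw [show Finset.range n = Finset.range (n - 1 + 1) from by rw [hp],
          Finset.sum_range_succ, if_pos hp, zero_mul, add_zero]
        rw [show Finset.range n = Finset.range (n - 1 + 1) from by rw [hp],
          Finset.sum_range_succ'] at ih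
        have ih' : ∑ a ∈ Finset.range (n - 1),
            Vpos n q k (a + 1 + 1) * x ^ (n - 1 - (a + 1))
            = x ^ k - Vpos n q k (0 + 1) * x ^ (n - 1 - 0) := by linarith [ih]
        have hterm : ∀ a ∈ Finset.range (n - 1),
            (if a + 1 = n then 0 else Vpos n q k (a + 1 + 1)) * x ^ (n - 1 - a)
              = Vpos n q k (a + 1 + 1) * x ^ (n - 1 - (a + 1)) * x := by
          intro a ha
          have hlt : a < n - 1 := Finset.mem_range.mp ha
          rw [if_neg (by omega : ¬ a + 1 = n),
            (by omega : n - 1 - a = n - 1 - (a + 1) + 1), pow_succ]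
          ring
        rw [Finset.sum_congr rfl hterm, ← Finset.sum_mul, ih']
        norm_num
      rw [h1]
      have hx : x ^ (n - 1) * x = x ^ n := by rw [← pow_succ, hp]
      have : (x ^ k - Vpos n q k 1 * x ^ (n - 1)) * x
          = x ^ (k + 1) - Vpos n q k 1 * (x ^ (n - 1) * x) := by rw [pow_succ]; ring
      rw [this, hx]
      ring

lemma sum_Vneg {n : ℕ} (hn : 1 ≤ n) (q : ℕ → ℝ) (x : ℝ) (hx : x ≠ 0) (hq : q n ≠ 0)
    (hroot : ∑ a ∈ Finset.range n, q (a + 1) * x ^ (n - 1 - a) = -(x ^ n)) (J : ℕ) :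
    ∑ a ∈ Finset.range n, Vneg n q J (a + 1) * x ^ (n - 1 - a) = x⁻¹ ^ J := by
  have hp : n - 1 + 1 = n := by omega
  induction J with
  | zero =>
      simp only [Vneg]
      rw [Finset.sum_eq_single (n - 1)]
      · rw [if_pos hp, one_mul, Nat.sub_self, pow_zero, pow_zero]
      · intro a ha hne
        rw [if_neg (by omega : ¬ a + 1 = n), zero_mul]
      · intro h
        exact absurd (Finset.mem_range.mpr (by omega)) h
  | succ j ih =>
      apply mul_right_cancel₀ hx
      have hRHS : x⁻¹ ^ (j + 1) * x = x⁻¹ ^ j := by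
        rw [pow_succ, mul_assoc, inv_mul_cancel₀ hx, mul_one]
      rw [hRHS, Finset.sum_mul]
      simp only [Vneg, Nat.add_sub_cancel, sub_mul]
      rw [Finset.sum_sub_distrib]
      -- T1
      have hT1 : ∑ a ∈ Finset.range n,
          (if a + 1 = 1 then 0 else Vneg n q j a) * x ^ (n - 1 - a) * x
          = x⁻¹ ^ j - Vneg n q j n := by
        rw [show Finset.range n = Finset.range (n - 1 + 1) from by rw [hp],
          Finset.sum_range_succ']
        rw [if_pos rfl, zero_mul, zero_mul, add_zero]
        have hterm : ∀ a ∈ Finset.range (n - 1),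
            (if a + 1 + 1 = 1 then 0 else Vneg n q j (a + 1)) * x ^ (n - 1 - (a + 1)) * x
              = Vneg n q j (a + 1) * x ^ (n - 1 - a) := by
          intro a ha
          have hlt : a < n - 1 := Finset.mem_range.mp ha
          rw [if_neg (by omega : ¬ a + 1 + 1 = 1),
            (by omega : n - 1 - a = n - 1 - (a + 1) + 1), pow_succ]
          ring
        rw [Finset.sum_congr rfl hterm]
        rw [show Finset.range n = Finset.range (n - 1 + 1) from by rw [hp],
          Finset.sum_range_succ] at ih
        rw [hp, Nat.sub_self, pow_zero, mul_one] at ih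
        linarith [ih]
      rw [hT1]
      -- T2
      have hW : ∑ a ∈ Finset.range n,
          (if a + 1 = 1 then 1 else q a) / q n * Vneg n q j n * x ^ (n - 1 - a) * x
          = Vneg n q j n / q n * -(q n) := by
        have hterm : ∀ a ∈ Finset.range n,
            (if a + 1 = 1 then 1 else q a) / q n * Vneg n q j n * x ^ (n - 1 - a) * x
              = Vneg n q j n / q n *
                ((if a + 1 = 1 then 1 else q a) * x ^ (n - 1 - a) * x) := by
          intro a _; ring
        rw [Finset.sum_congr rfl hterm, ← Finset.mul_sum]
        congr 1
        rw [show Finset.range n = Finset.range (n - 1 + 1) from by rw [hp],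
          Finset.sum_range_succ']
        rw [if_pos rfl, one_mul, Nat.sub_zero]
        have hterm2 : ∀ a ∈ Finset.range (n - 1),
            (if a + 1 + 1 = 1 then 1 else q (a + 1)) * x ^ (n - 1 - (a + 1)) * x
              = q (a + 1) * x ^ (n - 1 - a) := by
          intro a ha
          have hlt : a < n - 1 := Finset.mem_range.mp ha
          rw [if_neg (by omega : ¬ a + 1 + 1 = 1),
            (by omega : n - 1 - a = n - 1 - (a + 1) + 1), pow_succ]
          ring
        rw [Finset.sum_congr rfl hterm2]
        rw [show Finset.range n = Finset.range (n - 1 + 1) from by rw [hp],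
          Finset.sum_range_succ] at hroot
        rw [hp, Nat.sub_self, pow_zero, mul_one] at hroot
        have hxn : x ^ (n - 1) * x = x ^ n := by rw [← pow_succ, hp]
        linarith [hroot]
      rw [hW]
      have hdiv : Vneg n q j n / q n * -(q n) = -(Vneg n q j n) := by
        field_simp
      rw [hdiv]
      ring

lemma viete_n_ne_zero {n : ℕ} (lam : Fin n → ℝ) (h0 : ∀ j, lam j ≠ 0) :
    viete n lam ≠ 0 := by
  have hps : Finset.powersetCard n (Finset.univ : Finset (Fin n)) = {Finset.univ} := by
    have h := Finset.powersetCard_self (Finset.univ : Finset (Fin n))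
    rwa [Finset.card_fin] at h
  rw [viete, hps, Finset.sum_singleton]
  exact mul_ne_zero (pow_ne_zero _ (by norm_num))
    (Finset.prod_ne_zero_iff.mpr fun j _ => h0 j)

lemma range_root_identity {n : ℕ} (lam : Fin n → ℝ) (r : Fin n) :
    ∑ a ∈ Finset.range n, viete (a + 1) lam * lam r ^ (n - 1 - a) = -(lam r ^ n) := by
  have h := root_identity lam r
  rw [sum_Icc_one] at h
  rw [← h]
  exact Finset.sum_congr rfl fun a ha => by
    rw [(by omega : n - 1 - a = n - (a + 1))]

lemma sum_benenti {n : ℕ} (hn : 1 ≤ n) (lam : Fin n → ℝ) (h0 : ∀ j, lam j ≠ 0)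
    (r : Fin n) (k : ℤ) :
    ∑ i ∈ Finset.Icc 1 n, benenti n (fun a => viete a lam) k i * lam r ^ (n - i)
      = lam r ^ k := by
  have hroot := range_root_identity lam r
  rw [sum_Icc_one]
  have hconv : ∀ a ∈ Finset.range n,
      benenti n (fun a => viete a lam) k (a + 1) * lam r ^ (n - (a + 1))
        = benenti n (fun a => viete a lam) k (a + 1) * lam r ^ (n - 1 - a) :=
    fun a _ => by rw [(by omega : n - (a + 1) = n - 1 - a)]
  rw [Finset.sum_congr rfl hconv]
  by_cases hk : 0 ≤ k
  · simp only [benenti, if_pos hk]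
    rw [sum_Vpos hn (fun a => viete a lam) (lam r) hroot, ← zpow_natCast, Int.toNat_of_nonneg hk]
  · simp only [benenti, if_neg hk]
    rw [sum_Vneg hn (fun a => viete a lam) (lam r) (h0 r) (viete_n_ne_zero lam h0) hroot]
    rw [← zpow_natCast ((lam r)⁻¹), inv_zpow, ← zpow_neg]
    congr 1
    omega

end StackelAux

theorem stackel_separation_relations (n : ℕ) (hn : 1 ≤ n) (m k : ℤ) (ε : ℝ)
    (hε : ε = 1 ∨ ε = -1) (lam : Fin n → ℝ) (hinj : Function.Injective lam)
    (h0 : ∀ j, lam j ≠ 0) (mu : Fin n → ℝ) (r : Fin n) :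
    (∑ i ∈ Finset.Icc 1 n, stackelH n m k ε i lam mu * lam r ^ (n - i)) =
      lam r ^ m * mu r ^ 2 + ε / 4 * lam r ^ k := by
  have hΔ : Delta lam r ≠ 0 := by
    rw [Delta]
    refine Finset.prod_ne_zero_iff.mpr fun s hs => sub_ne_zero.mpr fun h => ?_
    exact (Finset.mem_erase.mp hs).1 (hinj h.symm)
  simp only [stackelH, add_mul]
  rw [Finset.sum_add_distrib]
  have hpot : ∑ i ∈ Finset.Icc 1 n,
      ε / 4 * benenti n (fun a => viete a lam) k i * lam r ^ (n - i)
      = ε / 4 * lam r ^ k := by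
    rw [← sum_benenti hn lam h0 r k, Finset.mul_sum]
    exact Finset.sum_congr rfl fun i _ => by ring
  rw [hpot]
  have hkin : ∑ i ∈ Finset.Icc 1 n,
      (∑ j : Fin n, (-vieteD i lam j) * (lam j ^ m / Delta lam j) * mu j ^ 2)
        * lam r ^ (n - i)
      = lam r ^ m * mu r ^ 2 := by
    have hswap : ∑ i ∈ Finset.Icc 1 n,
        (∑ j : Fin n, (-vieteD i lam j) * (lam j ^ m / Delta lam j) * mu j ^ 2)
          * lam r ^ (n - i)
        = ∑ j : Fin n, (lam j ^ m / Delta lam j) * mu j ^ 2 *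
            (∑ i ∈ Finset.Icc 1 n, (-vieteD i lam j) * lam r ^ (n - i)) := by
      rw [Finset.sum_congr rfl fun i (_ : i ∈ Finset.Icc 1 n) => Finset.sum_mul
        Finset.univ (fun j => (-vieteD i lam j) * (lam j ^ m / Delta lam j) * mu j ^ 2)
        (lam r ^ (n - i)), Finset.sum_comm]
      refine Finset.sum_congr rfl fun j _ => ?_
      rw [Finset.mul_sum]
      exact Finset.sum_congr rfl fun i _ => by ring
    rw [hswap]
    have hval : ∀ j : Fin n,
        (∑ i ∈ Finset.Icc 1 n, (-vieteD i lam j) * lam r ^ (n - i))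
        = ∏ s ∈ (Finset.univ : Finset (Fin n)).erase j, (lam r - lam s) :=
      fun j => sum_neg_vieteD lam (lam r) j
    rw [Finset.sum_eq_single r]
    · rw [hval r]
      have : (∏ s ∈ (Finset.univ : Finset (Fin n)).erase r, (lam r - lam s))
          = Delta lam r := rfl
      rw [this]
      field_simp
    · intro j _ hjr
      rw [hval j, Finset.prod_eq_zero (Finset.mem_erase.mpr ⟨hjr.symm ∘ Eq.symm ∘ id ∘ Eq.symm, Finset.mem_univ r⟩) (sub_self (lam r)), mul_zero]
    · intro h
      exact absurd (Finset.mem_univ r) h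
  rw [hkin]
end
end

section
/- Let n ≥ 1, m, k ∈ ℤ, ε = ±1. On the open subset U of ℝ^{2n} consisting of points (λ,μ) where the entries of λ are pairwise distinct and nonzero, the Stäckel Hamiltonians Poisson-commute: {H_i^{n,m,k}, H_j^{n,m,k}} = 0 on U for all i, j ∈ {1,…,n}, where {F,G} = ∑_{r=1}^n (∂F/∂λ_r · ∂G/∂μ_r − ∂F/∂μ_r · ∂G/∂λ_r) is the canonical Poisson bracket. -/
noncomputable section

open Finset Polynomial in
lemma vieta_prod {n : ℕ} (l : Fin n → ℝ) (s : Finset (Fin n)) (x : ℝ) :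
    ∏ j ∈ s, (x - l j) =
      ∑ i ∈ Finset.range (s.card + 1),
        (-1:ℝ)^i * (∑ T ∈ s.powersetCard i, ∏ j ∈ T, l j) * x ^ (s.card - i) := by
  have h := Multiset.prod_X_add_C_eq_sum_esymm (Multiset.map (fun j => -l j) s.val)
  rw [Multiset.map_map, Multiset.card_map] at h
  have hL : (Multiset.map ((fun r => X + C r) ∘ fun j => -l j) s.val).prod
      = ∏ j ∈ s, (X - C (l j) : ℝ[X]) := by
    rw [Finset.prod_eq_multiset_prod]
    congr 1
    apply Multiset.map_congr rfl
    intro j _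
    simp [sub_eq_add_neg]
  rw [hL] at h
  have hE : ∀ i, (Multiset.map (fun j => -l j) s.val).esymm i
      = (-1:ℝ)^i * ∑ T ∈ s.powersetCard i, ∏ j ∈ T, l j := by
    intro i
    rw [Finset.esymm_map_val, Finset.mul_sum]
    apply Finset.sum_congr rfl
    intro T hT
    have hc : T.card = i := (Finset.mem_powersetCard.mp hT).2
    rw [← hc]
    calc ∏ j ∈ T, -l j = ∏ j ∈ T, (-1) * l j := by simp
    _ = (-1:ℝ)^T.card * ∏ j ∈ T, l j := by rw [Finset.prod_mul_distrib, Finset.prod_const]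
  have h2 := congrArg (Polynomial.eval x) h
  rw [eval_prod, eval_finset_sum] at h2
  simp only [eval_mul, eval_pow, eval_C, eval_X, eval_sub, hE] at h2
  exact h2

/-- projection as CLM -/
def prj {n : ℕ} (j : Fin n) : (Fin n → ℝ) →L[ℝ] ℝ := ContinuousLinearMap.proj j

/-- elementary symmetric sum over subsets avoiding `r` -/
def esub {n : ℕ} (i : ℕ) (r : Fin n) (l : Fin n → ℝ) : ℝ :=
  ∑ T ∈ ((Finset.univ : Finset (Fin n)).erase r).powersetCard i, ∏ j ∈ T, l j

lemma hasFDerivAt_sumprod {n : ℕ} (P : Finset (Finset (Fin n))) (l : Fin n → ℝ) :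
    HasFDerivAt (fun l : Fin n → ℝ => ∑ T ∈ P, ∏ j ∈ T, l j)
      (∑ T ∈ P, ∑ j ∈ T, (∏ j' ∈ T.erase j, l j') • prj j) l := by
  apply HasFDerivAt.fun_sum
  intro T _
  exact HasFDerivAt.finset_prod (fun j _ => (prj j).hasFDerivAt)

lemma prj_single {n : ℕ} (j r : Fin n) : prj j (Pi.single r (1:ℝ)) = if j = r then 1 else 0 := by
  simp [prj, Pi.single_apply]

lemma sumprod_apply {n : ℕ} (P : Finset (Finset (Fin n))) (l : Fin n → ℝ) (r : Fin n) :
    (∑ T ∈ P, ∑ j ∈ T, (∏ j' ∈ T.erase j, l j') • prj j) (Pi.single r 1)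
      = ∑ T ∈ P.filter (fun T => r ∈ T), ∏ j' ∈ T.erase r, l j' := by
  rw [ContinuousLinearMap.sum_apply, Finset.sum_filter]
  apply Finset.sum_congr rfl
  intro T _
  rw [ContinuousLinearMap.sum_apply]
  by_cases h : r ∈ T
  · rw [if_pos h, Finset.sum_eq_single r]
    · simp [prj_single]
    · intro b _ hb
      simp [prj_single, hb]
    · intro h'; exact absurd h h'
  · rw [if_neg h]
    apply Finset.sum_eq_zero
    intro b hb
    have : b ≠ r := fun e => h (e ▸ hb)
    simp [prj_single, this]

lemma hasFDerivAt_viete_s5 {n : ℕ} (i : ℕ) (l : Fin n → ℝ) :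
    HasFDerivAt (viete i : (Fin n → ℝ) → ℝ)
      ((-1:ℝ)^i • ∑ T ∈ Finset.powersetCard i (Finset.univ : Finset (Fin n)),
        ∑ j ∈ T, (∏ j' ∈ T.erase j, l j') • prj j) l :=
  (hasFDerivAt_sumprod _ l).const_mul _

lemma vieteD_succ {n : ℕ} (i : ℕ) (l : Fin n → ℝ) (r : Fin n) :
    vieteD (i+1) l r = (-1:ℝ)^(i+1) * esub i r l := by
  rw [vieteD, (hasFDerivAt_viete_s5 (i+1) l).fderiv, ContinuousLinearMap.smul_apply,
    sumprod_apply, smul_eq_mul]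
  congr 1
  rw [esub]
  apply Finset.sum_nbij' (fun T => T.erase r) (fun T => insert r T)
  · intro T hT
    rw [Finset.mem_filter, Finset.mem_powersetCard] at hT
    rw [Finset.mem_powersetCard]
    constructor
    · intro x hx
      rw [Finset.mem_erase] at hx ⊢
      exact ⟨hx.1, Finset.mem_univ x⟩
    · rw [Finset.card_erase_of_mem hT.2, hT.1.2]
      rfl
  · intro T hT
    rw [Finset.mem_powersetCard] at hT
    rw [Finset.mem_filter, Finset.mem_powersetCard]
    have hr : r ∉ T := fun h => (Finset.mem_erase.mp (hT.1 h)).1 rfl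
    refine ⟨⟨fun x _ => Finset.mem_univ x, ?_⟩, Finset.mem_insert_self r T⟩
    rw [Finset.card_insert_of_notMem hr, hT.2]
  · intro T hT
    rw [Finset.mem_filter] at hT
    exact Finset.insert_erase hT.2
  · intro T hT
    rw [Finset.mem_powersetCard] at hT
    have hr : r ∉ T := fun h => (Finset.mem_erase.mp (hT.1 h)).1 rfl
    exact Finset.erase_insert hr
  · intro T hT
    rfl

lemma vieteD_zero {n : ℕ} (l : Fin n → ℝ) (r : Fin n) : vieteD 0 l r = 0 := by
  have : (viete 0 : (Fin n → ℝ) → ℝ) = fun _ => 1 := by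
    funext l'
    simp [viete]
  rw [vieteD, this]
  simp

lemma neg_vieteD_succ {n : ℕ} (i : ℕ) (l : Fin n → ℝ) (r : Fin n) :
    -vieteD (i+1) l r = (-1:ℝ)^i * esub i r l := by
  rw [vieteD_succ, pow_succ]
  ring
lemma Delta_ne_zero {n : ℕ} {l : Fin n → ℝ} (hl : Function.Injective l) (s : Fin n) :
    Delta l s ≠ 0 := by
  rw [Delta]
  apply Finset.prod_ne_zero_iff.mpr
  intro j hj
  have : j ≠ s := (Finset.mem_erase.mp hj).1
  exact sub_ne_zero.mpr (fun h => this (hl h).symm)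

lemma viete_zero {n : ℕ} (l : Fin n → ℝ) : viete 0 l = 1 := by simp [viete]

/-- Vandermonde-type matrix -/
def Smat {n : ℕ} (l : Fin n → ℝ) : Matrix (Fin n) (Fin n) ℝ :=
  fun r t => (l r)^(n-1-(t:ℕ))

/-- inverse matrix built from esub/Delta -/
def Bmat {n : ℕ} (l : Fin n → ℝ) : Matrix (Fin n) (Fin n) ℝ :=
  fun t s => (-1:ℝ)^(t:ℕ) * esub t s l / Delta l s

lemma card_erase_univ {n : ℕ} (s : Fin n) :
    ((Finset.univ : Finset (Fin n)).erase s).card = n - 1 := by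
  rw [Finset.card_erase_of_mem (Finset.mem_univ s), Finset.card_univ, Fintype.card_fin]

lemma sum_pow_esub {n : ℕ} (hn : 1 ≤ n) (l : Fin n → ℝ) (x : ℝ) (s : Fin n) :
    ∑ t ∈ Finset.range n, x^(n-1-t) * ((-1:ℝ)^t * esub t s l)
      = ∏ j ∈ (Finset.univ : Finset (Fin n)).erase s, (x - l j) := by
  have h := vieta_prod l ((Finset.univ : Finset (Fin n)).erase s) x
  rw [card_erase_univ, Nat.sub_add_cancel hn] at h
  rw [h]
  apply Finset.sum_congr rfl
  intro t _
  rw [esub]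
  ring

lemma Smat_mul_Bmat {n : ℕ} (hn : 1 ≤ n) {l : Fin n → ℝ} (hl : Function.Injective l) :
    Smat l * Bmat l = 1 := by
  ext r s
  rw [Matrix.mul_apply, Matrix.one_apply]
  have : ∀ t : Fin n, Smat l r t * Bmat l t s
      = (l r)^(n-1-(t:ℕ)) * ((-1:ℝ)^(t:ℕ) * esub t s l) / Delta l s := by
    intro t
    rw [Smat, Bmat]
    ring
  rw [Finset.sum_congr rfl (fun t _ => this t), ← Finset.sum_div]
  rw [Fin.sum_univ_eq_sum_range (fun t => (l r)^(n-1-t) * ((-1:ℝ)^t * esub t s l)) n]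
  rw [sum_pow_esub hn l (l r) s]
  by_cases h : r = s
  · subst h
    rw [if_pos rfl, ← Delta, div_self (Delta_ne_zero hl r)]
  · rw [if_neg h]
    rw [Finset.prod_eq_zero (Finset.mem_erase.mpr ⟨h, Finset.mem_univ r⟩) (sub_self (l r))]
    exact zero_div _

lemma Bmat_mul_Smat {n : ℕ} (hn : 1 ≤ n) {l : Fin n → ℝ} (hl : Function.Injective l) :
    Bmat l * Smat l = 1 :=
  mul_eq_one_comm.mp (Smat_mul_Bmat hn hl)

lemma root_sum {n : ℕ} (l : Fin n → ℝ) (r : Fin n) :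
    ∑ i ∈ Finset.range (n+1), viete i l * (l r)^(n-i) = 0 := by
  have h := vieta_prod l (Finset.univ : Finset (Fin n)) (l r)
  rw [Finset.card_univ, Fintype.card_fin] at h
  rw [Finset.prod_eq_zero (Finset.mem_univ r) (sub_self (l r))] at h
  have h2 : ∑ i ∈ Finset.range (n+1), viete i l * (l r)^(n-i)
      = ∑ i ∈ Finset.range (n+1),
        (-1:ℝ)^i * (∑ T ∈ Finset.powersetCard i (Finset.univ : Finset (Fin n)), ∏ j ∈ T, l j) * (l r)^(n-i) := by
    apply Finset.sum_congr rfl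
    intro i _
    rw [viete]
  rw [h2, ← h]

lemma root_sum' {n : ℕ} (l : Fin n → ℝ) (r : Fin n) :
    ∑ i ∈ Finset.range n, viete (i+1) l * (l r)^(n-(i+1)) = -(l r)^n := by
  have h := root_sum l r
  rw [Finset.sum_range_succ'] at h
  rw [viete_zero, Nat.sub_zero, one_mul] at h
  linarith

lemma viete_top {n : ℕ} (l : Fin n → ℝ) :
    viete n l = (-1:ℝ)^n * ∏ j, l j := by
  rw [viete]
  have hcard : (Finset.univ : Finset (Fin n)).card = n := by simp
  have hps : Finset.powersetCard n (Finset.univ : Finset (Fin n)) = {Finset.univ} := by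
    ext T
    rw [Finset.mem_powersetCard, Finset.mem_singleton]
    constructor
    · rintro ⟨hsub, hc⟩
      exact Finset.eq_of_subset_of_card_le hsub (by rw [hc, hcard])
    · rintro rfl
      exact ⟨Finset.Subset.refl _, hcard⟩
  congr 1
  rw [hps, Finset.sum_singleton]

lemma viete_top_ne_zero {n : ℕ} {l : Fin n → ℝ} (h0 : ∀ r, l r ≠ 0) :
    viete n l ≠ 0 := by
  rw [viete_top]
  exact mul_ne_zero (pow_ne_zero _ (neg_ne_zero.mpr one_ne_zero)) (Finset.prod_ne_zero_iff.mpr (fun j _ => h0 j))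

lemma root_sum_low {n : ℕ} {l : Fin n → ℝ} (r : Fin n) (hx : l r ≠ 0) :
    ∑ i ∈ Finset.range n, viete i l * (l r)^(n-1-i) = -viete n l / l r := by
  have h := root_sum l r
  rw [Finset.sum_range_succ, Nat.sub_self, pow_zero, mul_one] at h
  have h2 : ∑ i ∈ Finset.range n, viete i l * (l r)^(n-i) = -viete n l := by linarith
  have h3 : ∀ i ∈ Finset.range n, viete i l * (l r)^(n-i) = (viete i l * (l r)^(n-1-i)) * l r := by
    intro i hi
    have hi' : i < n := Finset.mem_range.mp hi
    have : n - i = (n - 1 - i) + 1 := by omega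
    rw [this, pow_succ]
    ring
  rw [Finset.sum_congr rfl h3, ← Finset.sum_mul] at h2
  field_simp at h2 ⊢
  linarith
lemma sep_pos {n : ℕ} (hn : 1 ≤ n) (l : Fin n → ℝ) (K : ℕ) (r : Fin n) :
    ∑ t ∈ Finset.range n, (l r)^(n-1-t) * Vpos n (fun a => viete a l) K (t+1) = (l r)^K := by
  obtain ⟨n', rfl⟩ : ∃ n', n = n' + 1 := ⟨n - 1, by omega⟩
  induction K with
  | zero =>
    rw [pow_zero]
    rw [Finset.sum_eq_single n']
    · have h0 : n' + 1 - 1 - n' = 0 := by omega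
      simp [Vpos, h0]
    · intro t ht hne
      simp only [Vpos]
      rw [if_neg (by omega), mul_zero]
    · intro h
      exact absurd (Finset.mem_range.mpr (by omega)) h
  | succ K ih =>
    set x := l r with hx
    set q : ℕ → ℝ := fun a => viete a l with hq
    have hS : ∑ t ∈ Finset.range (n'+1), x^(n'+1-1-t) * Vpos (n'+1) q K (t+1) = x^K := ih
    have hsplit : ∑ t ∈ Finset.range (n'+1), x^(n'+1-1-t) * Vpos (n'+1) q (K+1) (t+1)
        = (∑ t ∈ Finset.range (n'+1), x^(n'+1-1-t) * (if t+1 = n'+1 then 0 else Vpos (n'+1) q K (t+2)))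
          - (∑ t ∈ Finset.range (n'+1), x^(n'+1-1-t) * q (t+1)) * Vpos (n'+1) q K 1 := by
      rw [Finset.sum_mul, ← Finset.sum_sub_distrib]
      apply Finset.sum_congr rfl
      intro t _
      show x ^ (n'+1-1-t) * ((if t + 1 = n'+1 then 0 else Vpos (n'+1) q K (t + 1 + 1)) - q (t+1) * Vpos (n'+1) q K 1) = _
      ring
    have hroot : ∑ t ∈ Finset.range (n'+1), x^(n'+1-1-t) * q (t+1) = -x^(n'+1) := by
      rw [← root_sum' l r]
      apply Finset.sum_congr rfl
      intro t ht
      have : n' + 1 - (t+1) = n' + 1 - 1 - t := by omega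
      rw [this, hq]
      ring
    have hfirst : ∑ t ∈ Finset.range (n'+1), x^(n'+1-1-t) * (if t+1 = n'+1 then 0 else Vpos (n'+1) q K (t+2))
        = x * (x^K - x^(n') * Vpos (n'+1) q K 1) := by
      rw [Finset.sum_range_succ, if_pos rfl, mul_zero, add_zero]
      have hterm : ∀ t ∈ Finset.range n',
          x^(n'+1-1-t) * (if t+1 = n'+1 then 0 else Vpos (n'+1) q K (t+2))
            = x * (x^(n'+1-1-(t+1)) * Vpos (n'+1) q K (t+2)) := by
        intro t ht
        have htr : t < n' := Finset.mem_range.mp ht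
        rw [if_neg (by omega)]
        have : n'+1-1-t = (n'+1-1-(t+1)) + 1 := by omega
        rw [this, pow_succ]
        ring
      rw [Finset.sum_congr rfl hterm, ← Finset.mul_sum]
      congr 1
      rw [Finset.sum_range_succ'] at hS
      have hf0 : x^(n'+1-1-0) * Vpos (n'+1) q K (0+1) = x^(n') * Vpos (n'+1) q K 1 := by norm_num
      rw [hf0] at hS
      linarith
    rw [hsplit, hroot, hfirst, pow_succ]
    ring

lemma sep_neg {n : ℕ} (hn : 1 ≤ n) {l : Fin n → ℝ} (hl0 : ∀ r, l r ≠ 0) (J : ℕ) (r : Fin n) :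
    ∑ t ∈ Finset.range n, (l r)^(n-1-t) * Vneg n (fun a => viete a l) J (t+1) = ((l r)^J)⁻¹ := by
  obtain ⟨n', rfl⟩ : ∃ n', n = n' + 1 := ⟨n - 1, by omega⟩
  induction J with
  | zero =>
    rw [pow_zero, inv_one]
    rw [Finset.sum_eq_single n']
    · have h0 : n' + 1 - 1 - n' = 0 := by omega
      simp [Vneg, h0]
    · intro t ht hne
      simp only [Vneg]
      rw [if_neg (by omega), mul_zero]
    · intro h
      exact absurd (Finset.mem_range.mpr (by omega)) h
  | succ J ih =>
    set x := l r with hx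
    have hxne : x ≠ 0 := hl0 r
    set q : ℕ → ℝ := fun a => viete a l with hq
    have hqn : q (n'+1) ≠ 0 := viete_top_ne_zero hl0
    have hS : ∑ t ∈ Finset.range (n'+1), x^(n'+1-1-t) * Vneg (n'+1) q J (t+1) = (x^J)⁻¹ := ih
    have hsplit : ∑ t ∈ Finset.range (n'+1), x^(n'+1-1-t) * Vneg (n'+1) q (J+1) (t+1)
        = (∑ t ∈ Finset.range (n'+1), x^(n'+1-1-t) * (if t+1 = 1 then 0 else Vneg (n'+1) q J t))
          - (∑ t ∈ Finset.range (n'+1), x^(n'+1-1-t) * q t) / q (n'+1) * Vneg (n'+1) q J (n'+1) := by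
      rw [Finset.sum_div, Finset.sum_mul, ← Finset.sum_sub_distrib]
      apply Finset.sum_congr rfl
      intro t _
      show x ^ (n'+1-1-t) * ((if t+1 = 1 then 0 else Vneg (n'+1) q J (t+1-1))
          - (if t+1 = 1 then 1 else q (t+1-1)) / q (n'+1) * Vneg (n'+1) q J (n'+1)) = _
      have h1 : t + 1 - 1 = t := by omega
      rw [h1]
      have h2 : (if t+1 = 1 then (1:ℝ) else q t) = q t := by
        by_cases h : t + 1 = 1
        · have ht0 : t = 0 := by omega
          rw [if_pos h, ht0, hq]
          exact (viete_zero l).symm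
        · rw [if_neg h]
      rw [h2]
      ring
    have hroot : ∑ t ∈ Finset.range (n'+1), x^(n'+1-1-t) * q t = -q (n'+1) / x := by
      rw [← root_sum_low r hxne]
      apply Finset.sum_congr rfl
      intro t _
      rw [hq]
      ring
    have hfirst : ∑ t ∈ Finset.range (n'+1), x^(n'+1-1-t) * (if t+1 = 1 then 0 else Vneg (n'+1) q J t)
        = ((x^J)⁻¹ - Vneg (n'+1) q J (n'+1)) / x := by
      rw [Finset.sum_range_succ']
      rw [if_pos rfl, mul_zero, add_zero]
      have hterm : ∀ t ∈ Finset.range n',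
          x^(n'+1-1-(t+1)) * (if t+1+1 = 1 then 0 else Vneg (n'+1) q J (t+1))
            = (x^(n'+1-1-t) * Vneg (n'+1) q J (t+1)) / x := by
        intro t ht
        have htr : t < n' := Finset.mem_range.mp ht
        rw [if_neg (by omega)]
        have : n'+1-1-t = (n'+1-1-(t+1)) + 1 := by omega
        rw [this, pow_succ]
        field_simp
      rw [Finset.sum_congr rfl hterm, ← Finset.sum_div]
      congr 1
      rw [Finset.sum_range_succ] at hS
      have hfl : x^(n'+1-1-n') * Vneg (n'+1) q J (n'+1) = Vneg (n'+1) q J (n'+1) := by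
        have : n' + 1 - 1 - n' = 0 := by omega
        rw [this, pow_zero, one_mul]
      rw [hfl] at hS
      linarith
    rw [hsplit, hroot, hfirst, pow_succ]
    field_simp
    ring
lemma benenti_sep {n : ℕ} (hn : 1 ≤ n) {l : Fin n → ℝ} (h0 : ∀ r, l r ≠ 0) (k : ℤ) (r : Fin n) :
    ∑ t ∈ Finset.range n, (l r)^(n-1-t) * benenti n (fun a => viete a l) k (t+1) = (l r)^k := by
  rcases le_or_gt 0 k with hk | hk
  · have hb : ∀ t : ℕ, benenti n (fun a => viete a l) k (t+1) = Vpos n (fun a => viete a l) k.toNat (t+1) := by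
      intro t
      rw [benenti, if_pos hk]
    rw [Finset.sum_congr rfl (fun t _ => by rw [hb t]), sep_pos hn l k.toNat r]
    rw [← zpow_natCast, Int.toNat_of_nonneg hk]
  · have hb : ∀ t : ℕ, benenti n (fun a => viete a l) k (t+1) = Vneg n (fun a => viete a l) (-k).toNat (t+1) := by
      intro t
      rw [benenti, if_neg (not_le.mpr hk)]
    rw [Finset.sum_congr rfl (fun t _ => by rw [hb t]), sep_neg hn h0 (-k).toNat r]
    rw [← zpow_natCast, ← zpow_neg]
    congr 1
    omega

lemma solve_mulVec {n : ℕ} (hn : 1 ≤ n) {l : Fin n → ℝ} (hl : Function.Injective l)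
    (V c : Fin n → ℝ) (h : ∀ r, ∑ t, Smat l r t * V t = c r) (t : Fin n) :
    V t = ∑ r, Bmat l t r * c r := by
  have hm : (Smat l).mulVec V = c := by
    funext r
    rw [Matrix.mulVec, dotProduct]
    exact h r
  have hV : V = (Bmat l).mulVec c := by
    rw [← hm, Matrix.mulVec_mulVec, Bmat_mul_Smat hn hl, Matrix.one_mulVec]
  rw [hV]
  rfl

lemma solve_vecMul {n : ℕ} (hn : 1 ≤ n) {l : Fin n → ℝ} (hl : Function.Injective l)
    (X c : Fin n → ℝ) (h : ∀ u, ∑ r, X r * Smat l r u = c u) (r : Fin n) :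
    X r = ∑ u, c u * Bmat l u r := by
  have hm : Matrix.vecMul X (Smat l) = c := by
    funext u
    rw [Matrix.vecMul, dotProduct]
    exact h u
  have hX : X = Matrix.vecMul c (Bmat l) := by
    rw [← hm, Matrix.vecMul_vecMul, Smat_mul_Bmat hn hl, Matrix.vecMul_one]
  rw [hX]
  rfl

lemma benenti_formula {n : ℕ} (hn : 1 ≤ n) {l : Fin n → ℝ} (hl : Function.Injective l)
    (h0 : ∀ r, l r ≠ 0) (k : ℤ) (t : Fin n) :
    benenti n (fun a => viete a l) k ((t:ℕ)+1) = ∑ r, Bmat l t r * (l r)^k := by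
  apply solve_mulVec hn hl (fun t => benenti n (fun a => viete a l) k ((t:ℕ)+1)) (fun r => (l r)^k)
  intro r
  simp only [Smat]
  rw [Fin.sum_univ_eq_sum_range (fun t => (l r)^(n-1-t) * benenti n (fun a => viete a l) k (t+1)) n]
  exact benenti_sep hn h0 k r

/-- the separated right-hand sides -/
def psi {n : ℕ} (m k : ℤ) (ε : ℝ) (l w : Fin n → ℝ) (r : Fin n) : ℝ :=
  (l r)^m * (w r)^2 + ε/4 * (l r)^k

lemma stackelH_formula {n : ℕ} (hn : 1 ≤ n) (m k : ℤ) (ε : ℝ) {l : Fin n → ℝ}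
    (hl : Function.Injective l) (h0 : ∀ r, l r ≠ 0) (w : Fin n → ℝ) (t : Fin n) :
    stackelH n m k ε ((t:ℕ)+1) l w = ∑ r, Bmat l t r * psi m k ε l w r := by
  rw [stackelH, benenti_formula hn hl h0 k t]
  have h1 : ∀ r : Fin n, Bmat l t r * psi m k ε l w r
      = Bmat l t r * ((l r)^m * (w r)^2) + ε/4 * (Bmat l t r * (l r)^k) := by
    intro r
    rw [psi]
    ring
  rw [Finset.sum_congr rfl (fun r _ => h1 r), Finset.sum_add_distrib, ← Finset.mul_sum]
  congr 1
  apply Finset.sum_congr rfl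
  intro r _
  rw [show (t:ℕ)+1 = (t:ℕ)+1 from rfl, neg_vieteD_succ, Bmat]
  ring
lemma hasFDerivAt_coord_fun {n : ℕ} (lam : Fin n → ℝ) (r : Fin n) (f : ℝ → ℝ) (f' : ℝ)
    (hf : HasDerivAt f f' (lam r)) :
    HasFDerivAt (fun l : Fin n → ℝ => f (l r)) (f' • prj r) lam :=
  HasDerivAt.comp_hasFDerivAt lam hf (prj r).hasFDerivAt

lemma hasFDerivAt_pow_coord {n : ℕ} (lam : Fin n → ℝ) (r : Fin n) (p : ℕ) :
    HasFDerivAt (fun l : Fin n → ℝ => (l r)^p) (((p:ℝ) * (lam r)^(p-1)) • prj r) lam :=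
  hasFDerivAt_coord_fun lam r (fun x => x^p) _ (hasDerivAt_pow p (lam r))

lemma hasFDerivAt_zpow_coord {n : ℕ} (lam : Fin n → ℝ) (r : Fin n) (m : ℤ) (h : lam r ≠ 0) :
    HasFDerivAt (fun l : Fin n → ℝ => (l r)^m) (((m:ℝ) * (lam r)^(m-1)) • prj r) lam :=
  hasFDerivAt_coord_fun lam r (fun x => x^m) _ (hasDerivAt_zpow m (lam r) (Or.inl h))

/-- derivative of `stackelH` in the momenta -/
lemma fderiv_mu {n : ℕ} (m k : ℤ) (ε : ℝ) (i : ℕ) (lam mu : Fin n → ℝ) (r : Fin n) :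
    fderiv ℝ (fun w => stackelH n m k ε i lam w) mu (Pi.single r 1)
      = (-vieteD i lam r) * ((lam r)^m / Delta lam r) * (2 * mu r) := by
  have hterm : ∀ j : Fin n, HasFDerivAt
      (fun w : Fin n → ℝ => (-vieteD i lam j) * ((lam j)^m / Delta lam j) * w j ^ 2)
      (((-vieteD i lam j) * ((lam j)^m / Delta lam j) * (2 * mu j)) • prj j) mu := by
    intro j
    have h1 := hasFDerivAt_pow_coord mu j 2
    have h2 := h1.const_mul ((-vieteD i lam j) * ((lam j)^m / Delta lam j))
    have h3 : ((-vieteD i lam j) * ((lam j)^m / Delta lam j)) •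
        (((2:ℝ) * (mu j)^(2-1)) • prj j)
        = ((-vieteD i lam j) * ((lam j)^m / Delta lam j) * (2 * mu j)) • prj j := by
      rw [smul_smul]
      congr 1
      ring
    rw [← h3]
    exact h2
  have hsum : HasFDerivAt (fun w : Fin n → ℝ => stackelH n m k ε i lam w)
      (∑ j : Fin n, ((-vieteD i lam j) * ((lam j)^m / Delta lam j) * (2 * mu j)) • prj j) mu := by
    have h4 := HasFDerivAt.fun_sum (fun j (_ : j ∈ (Finset.univ : Finset (Fin n))) => hterm j)
    have h5 := h4.add_const (ε / 4 * benenti n (fun a => viete a lam) k i)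
    exact h5
  rw [hsum.fderiv, ContinuousLinearMap.sum_apply]
  rw [Finset.sum_eq_single r]
  · rw [ContinuousLinearMap.smul_apply, prj_single, if_pos rfl, smul_eq_mul, mul_one]
  · intro b _ hb
    rw [ContinuousLinearMap.smul_apply, prj_single, if_neg hb, smul_eq_mul, mul_zero]
  · intro h
    exact absurd (Finset.mem_univ r) h

lemma fderiv_mu' {n : ℕ} (m k : ℤ) (ε : ℝ) (t : Fin n) (lam mu : Fin n → ℝ) (r : Fin n) :
    fderiv ℝ (fun w => stackelH n m k ε ((t:ℕ)+1) lam w) mu (Pi.single r 1)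
      = Bmat lam t r * (2 * (lam r)^m * mu r) := by
  rw [fderiv_mu, neg_vieteD_succ, Bmat]
  ring
lemma eventually_injective {n : ℕ} {lam : Fin n → ℝ} (hlam : Function.Injective lam) :
    ∀ᶠ l in nhds lam, Function.Injective l := by
  have h1 : ∀ᶠ l in nhds lam, ∀ a b : Fin n, a ≠ b → l a ≠ l b := by
    rw [Filter.eventually_all]
    intro a
    rw [Filter.eventually_all]
    intro b
    by_cases hab : a = b
    · filter_upwards with l h
      exact absurd hab h
    · have hc : ContinuousAt (fun l : Fin n → ℝ => l a - l b) lam :=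
        ((continuous_apply a).sub (continuous_apply b)).continuousAt
      have hne : lam a - lam b ≠ 0 := sub_ne_zero.mpr (fun h => hab (hlam h))
      filter_upwards [hc.eventually_ne hne] with l h _
      exact fun he => h (by rw [he, sub_self])
  filter_upwards [h1] with l hl1
  intro a b hab
  by_contra hne
  exact hl1 a b hne hab

lemma eventually_nonzero {n : ℕ} {lam : Fin n → ℝ} (h0 : ∀ r, lam r ≠ 0) :
    ∀ᶠ l in nhds lam, ∀ r : Fin n, l r ≠ 0 := by
  rw [Filter.eventually_all]
  intro r
  exact (continuous_apply r).continuousAt.eventually_ne (h0 r)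

lemma diff_esub {n : ℕ} (t : ℕ) (r : Fin n) (lam : Fin n → ℝ) :
    DifferentiableAt ℝ (fun l => esub t r l) lam :=
  (hasFDerivAt_sumprod (((Finset.univ : Finset (Fin n)).erase r).powersetCard t) lam).differentiableAt

lemma diff_Delta {n : ℕ} (r : Fin n) (lam : Fin n → ℝ) :
    DifferentiableAt ℝ (fun l => Delta l r) lam := by
  have : HasFDerivAt (fun l : Fin n → ℝ => Delta l r)
      (∑ j ∈ (Finset.univ : Finset (Fin n)).erase r,
        (∏ j' ∈ ((Finset.univ : Finset (Fin n)).erase r).erase j, (lam r - lam j')) • (prj r - prj j)) lam := by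
    apply HasFDerivAt.finset_prod
    intro j _
    exact ((prj r).hasFDerivAt.sub (prj j).hasFDerivAt)
  exact this.differentiableAt

lemma diff_Bmat {n : ℕ} {lam : Fin n → ℝ} (hlam : Function.Injective lam) (t r : Fin n) :
    DifferentiableAt ℝ (fun l => Bmat l t r) lam := by
  have heq : (fun l : Fin n → ℝ => Bmat l t r)
      = fun l => ((-1:ℝ)^(t:ℕ) * esub t r l) * (Delta l r)⁻¹ := by
    funext l
    rw [Bmat, div_eq_mul_inv]
  rw [heq]
  exact ((diff_esub t r lam).const_mul _).mul ((diff_Delta r lam).inv (Delta_ne_zero hlam r))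

lemma fderiv_pow_coord_apply {n : ℕ} (lam : Fin n → ℝ) (r s : Fin n) (p : ℕ) :
    fderiv ℝ (fun l : Fin n → ℝ => (l r)^p) lam (Pi.single s 1)
      = (if r = s then 1 else 0) * ((p:ℝ) * (lam r)^(p-1)) := by
  rw [(hasFDerivAt_pow_coord lam r p).fderiv, ContinuousLinearMap.smul_apply, prj_single,
    smul_eq_mul]
  ring

lemma Xval {n : ℕ} (hn : 1 ≤ n) {lam : Fin n → ℝ} (hlam : Function.Injective lam)
    (t s r : Fin n) :
    fderiv ℝ (fun l => Bmat l t r) lam (Pi.single s 1)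
      = ∑ u : Fin n, (-Bmat lam t s * (((n-1-(u:ℕ)):ℕ) * (lam s)^(n-1-(u:ℕ)-1))) * Bmat lam u r := by
  apply solve_vecMul hn hlam
    (fun r' => fderiv ℝ (fun l => Bmat l t r') lam (Pi.single s 1))
    (fun u => -Bmat lam t s * (((n-1-(u:ℕ)):ℕ) * (lam s)^(n-1-(u:ℕ)-1)))
  intro u
  set p : ℕ := n - 1 - (u:ℕ) with hp
  -- the matrix identity is locally constant
  have hev : (fun l : Fin n → ℝ => ∑ r', Bmat l t r' * (l r')^p)
      =ᶠ[nhds lam] (fun _ => (1 : Matrix (Fin n) (Fin n) ℝ) t u) := by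
    filter_upwards [eventually_injective hlam] with l hl
    have := Bmat_mul_Smat hn hl
    have h2 : (Bmat l * Smat l) t u = (1 : Matrix (Fin n) (Fin n) ℝ) t u := by rw [this]
    rw [Matrix.mul_apply] at h2
    rw [← h2]
    apply Finset.sum_congr rfl
    intro r' _
    rw [Smat]
  have hzero : fderiv ℝ (fun l : Fin n → ℝ => ∑ r', Bmat l t r' * (l r')^p) lam = 0 := by
    rw [hev.fderiv_eq]
    exact fderiv_const_apply _
  have hdiffP : ∀ r' : Fin n, DifferentiableAt ℝ (fun l : Fin n → ℝ => (l r')^p) lam :=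
    fun r' => (hasFDerivAt_pow_coord lam r' p).differentiableAt
  have hexp : fderiv ℝ (fun l : Fin n → ℝ => ∑ r', Bmat l t r' * (l r')^p) lam
      = ∑ r' : Fin n, (Bmat lam t r' • fderiv ℝ (fun l : Fin n → ℝ => (l r')^p) lam
          + (lam r')^p • fderiv ℝ (fun l => Bmat l t r') lam) := by
    rw [fderiv_fun_sum (fun r' _ => (diff_Bmat hlam t r').fun_mul (hdiffP r'))]
    apply Finset.sum_congr rfl
    intro r' _
    exact fderiv_fun_mul (diff_Bmat hlam t r') (hdiffP r')
  have happ := congrArg (fun (L : (Fin n → ℝ) →L[ℝ] ℝ) => L (Pi.single s 1)) (hexp.symm.trans hzero)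
  simp only [ContinuousLinearMap.sum_apply, ContinuousLinearMap.add_apply,
    ContinuousLinearMap.smul_apply, ContinuousLinearMap.zero_apply, smul_eq_mul] at happ
  have hcollapse : ∑ r' : Fin n,
      (Bmat lam t r' * fderiv ℝ (fun l : Fin n → ℝ => (l r')^p) lam (Pi.single s 1)
        + (lam r')^p * fderiv ℝ (fun l => Bmat l t r') lam (Pi.single s 1))
      = Bmat lam t s * ((p:ℝ) * (lam s)^(p-1))
        + ∑ r' : Fin n, (lam r')^p * fderiv ℝ (fun l => Bmat l t r') lam (Pi.single s 1) := by
    rw [Finset.sum_add_distrib]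
    congr 1
    rw [Finset.sum_eq_single s]
    · rw [fderiv_pow_coord_apply, if_pos rfl, one_mul]
    · intro b _ hb
      rw [fderiv_pow_coord_apply, if_neg hb, zero_mul, mul_zero]
    · intro h
      exact absurd (Finset.mem_univ s) h
  rw [hcollapse] at happ
  have hfin : ∑ r' : Fin n, (lam r')^p * fderiv ℝ (fun l => Bmat l t r') lam (Pi.single s 1)
      = -Bmat lam t s * ((p:ℝ) * (lam s)^(p-1)) := by linarith
  rw [← hfin]
  apply Finset.sum_congr rfl
  intro r' _
  rw [Smat]
  ring
lemma hasFDerivAt_psi {n : ℕ} (m k : ℤ) (ε : ℝ) {lam : Fin n → ℝ} (h0 : ∀ r, lam r ≠ 0)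
    (mu : Fin n → ℝ) (r : Fin n) :
    HasFDerivAt (fun l => psi m k ε l mu r)
      ((((mu r)^2 * ((m:ℝ) * (lam r)^(m-1)) + ε/4 * ((k:ℝ) * (lam r)^(k-1)))) • prj r) lam := by
  have h1 := (hasFDerivAt_zpow_coord lam r m (h0 r)).mul_const ((mu r)^2)
  have h2 := (hasFDerivAt_zpow_coord lam r k (h0 r)).const_mul (ε/4)
  have h3 := h1.add h2
  have he : ((mu r)^2 • (((m:ℝ) * (lam r)^(m-1)) • prj r)
      + (ε/4) • (((k:ℝ) * (lam r)^(k-1)) • prj r))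
      = (((mu r)^2 * ((m:ℝ) * (lam r)^(m-1)) + ε/4 * ((k:ℝ) * (lam r)^(k-1)))) • prj r := by
    rw [smul_smul, smul_smul, ← add_smul]
  rw [← he]
  exact h3

lemma fderiv_psi_apply {n : ℕ} (m k : ℤ) (ε : ℝ) {lam : Fin n → ℝ} (h0 : ∀ r, lam r ≠ 0)
    (mu : Fin n → ℝ) (r s : Fin n) :
    fderiv ℝ (fun l => psi m k ε l mu r) lam (Pi.single s 1)
      = (if r = s then 1 else 0)
          * ((mu r)^2 * ((m:ℝ) * (lam r)^(m-1)) + ε/4 * ((k:ℝ) * (lam r)^(k-1))) := by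
  rw [(hasFDerivAt_psi m k ε h0 mu r).fderiv, ContinuousLinearMap.smul_apply, prj_single,
    smul_eq_mul]
  ring

/-- the common factor in the `λ`-derivatives -/
def Aval (n : ℕ) (m k : ℤ) (ε : ℝ) (lam mu : Fin n → ℝ) (s : Fin n) : ℝ :=
  (mu s)^2 * ((m:ℝ) * (lam s)^(m-1)) + ε/4 * ((k:ℝ) * (lam s)^(k-1))
    - ∑ u : Fin n, (((n-1-(u:ℕ)):ℕ) * (lam s)^(n-1-(u:ℕ)-1)) * stackelH n m k ε ((u:ℕ)+1) lam mu

lemma fderiv_lam {n : ℕ} (hn : 1 ≤ n) (m k : ℤ) (ε : ℝ) {lam : Fin n → ℝ}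
    (hlam : Function.Injective lam) (h0 : ∀ r, lam r ≠ 0) (mu : Fin n → ℝ) (t s : Fin n) :
    fderiv ℝ (fun l => stackelH n m k ε ((t:ℕ)+1) l mu) lam (Pi.single s 1)
      = Bmat lam t s * Aval n m k ε lam mu s := by
  have hev : (fun l => stackelH n m k ε ((t:ℕ)+1) l mu)
      =ᶠ[nhds lam] (fun l => ∑ r, Bmat l t r * psi m k ε l mu r) := by
    filter_upwards [eventually_injective hlam, eventually_nonzero h0] with l h1 h2
    exact stackelH_formula hn m k ε h1 h2 mu t
  rw [hev.fderiv_eq]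
  have hdiffpsi : ∀ r : Fin n, DifferentiableAt ℝ (fun l => psi m k ε l mu r) lam :=
    fun r => (hasFDerivAt_psi m k ε h0 mu r).differentiableAt
  rw [fderiv_fun_sum (fun r _ => (diff_Bmat hlam t r).fun_mul (hdiffpsi r)),
    ContinuousLinearMap.sum_apply]
  have hterm : ∀ r : Fin n,
      (fderiv ℝ (fun l => Bmat l t r * psi m k ε l mu r) lam) (Pi.single s 1)
        = Bmat lam t r * fderiv ℝ (fun l => psi m k ε l mu r) lam (Pi.single s 1)
          + psi m k ε lam mu r * fderiv ℝ (fun l => Bmat l t r) lam (Pi.single s 1) := by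
    intro r
    rw [fderiv_fun_mul (diff_Bmat hlam t r) (hdiffpsi r)]
    rw [ContinuousLinearMap.add_apply, ContinuousLinearMap.smul_apply,
      ContinuousLinearMap.smul_apply, smul_eq_mul, smul_eq_mul]
  rw [Finset.sum_congr rfl (fun r _ => hterm r), Finset.sum_add_distrib]
  have hpart1 : ∑ r : Fin n, Bmat lam t r * fderiv ℝ (fun l => psi m k ε l mu r) lam (Pi.single s 1)
      = Bmat lam t s * ((mu s)^2 * ((m:ℝ) * (lam s)^(m-1)) + ε/4 * ((k:ℝ) * (lam s)^(k-1))) := by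
    rw [Finset.sum_eq_single s]
    · rw [fderiv_psi_apply m k ε h0 mu s s, if_pos rfl, one_mul]
    · intro b _ hb
      rw [fderiv_psi_apply m k ε h0 mu b s, if_neg hb, zero_mul, mul_zero]
    · intro h
      exact absurd (Finset.mem_univ s) h
  have hpart2 : ∑ r : Fin n, psi m k ε lam mu r * fderiv ℝ (fun l => Bmat l t r) lam (Pi.single s 1)
      = -Bmat lam t s * ∑ u : Fin n,
          (((n-1-(u:ℕ)):ℕ) * (lam s)^(n-1-(u:ℕ)-1)) * stackelH n m k ε ((u:ℕ)+1) lam mu := by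
    have h1 : ∀ r : Fin n, psi m k ε lam mu r * fderiv ℝ (fun l => Bmat l t r) lam (Pi.single s 1)
        = ∑ u : Fin n, (-Bmat lam t s * (((n-1-(u:ℕ)):ℕ) * (lam s)^(n-1-(u:ℕ)-1)))
            * (Bmat lam u r * psi m k ε lam mu r) := by
      intro r
      rw [Xval hn hlam t s r, Finset.mul_sum]
      apply Finset.sum_congr rfl
      intro u _
      ring
    rw [Finset.sum_congr rfl (fun r _ => h1 r), Finset.sum_comm]
    rw [Finset.mul_sum]
    apply Finset.sum_congr rfl
    intro u _
    rw [← Finset.mul_sum, ← stackelH_formula hn m k ε hlam h0 mu u]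
    ring
  rw [hpart1, hpart2, Aval]
  ring
theorem stackel_poisson_commute (n : ℕ) (hn : 1 ≤ n) (m k : ℤ) (ε : ℝ)
    (hε : ε = 1 ∨ ε = -1) (i j : ℕ) (hi1 : 1 ≤ i) (hi2 : i ≤ n) (hj1 : 1 ≤ j) (hj2 : j ≤ n)
    (lam mu : Fin n → ℝ) (hlam : Function.Injective lam) (h0 : ∀ r, lam r ≠ 0) :
    (∑ r : Fin n,
        (fderiv ℝ (fun l => stackelH n m k ε i l mu) lam (Pi.single r 1) *
            fderiv ℝ (fun w => stackelH n m k ε j lam w) mu (Pi.single r 1) -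
          fderiv ℝ (fun w => stackelH n m k ε i lam w) mu (Pi.single r 1) *
            fderiv ℝ (fun l => stackelH n m k ε j l mu) lam (Pi.single r 1))) = 0 := by
  obtain ⟨ti, hti⟩ : ∃ t : Fin n, i = (t:ℕ)+1 := ⟨⟨i-1, by omega⟩, by simp; omega⟩
  obtain ⟨tj, htj⟩ : ∃ t : Fin n, j = (t:ℕ)+1 := ⟨⟨j-1, by omega⟩, by simp; omega⟩
  subst hti htj
  apply Finset.sum_eq_zero
  intro r _
  rw [fderiv_lam hn m k ε hlam h0 mu ti r, fderiv_lam hn m k ε hlam h0 mu tj r,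
    fderiv_mu' m k ε ti lam mu r, fderiv_mu' m k ε tj lam mu r]
  ring
end
end
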